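/- arXiv:2003.12548 — 2 statements merged into one kernel-verified Lean document; each statement's English description precedes it below -/
import Mathlib

section
/- Let Π be a 2×2 real positive definite matrix, z ∈ ℝ², and W > 0. Then det(Φ(Π, z)) = det(Π) · W/(W + zᵀ Π z), where Φ(Π, z) := Π − (Π z zᵀ Π)/(W + zᵀ Π z). Consequently det(Φ(Π, z)) ≤ det(Π), with strict inequality if and only if z ≠ 0. -/
open Matrix

/-- The LSE covariance update map Φ(Π, z) = Π − (Π z zᵀ Π)/(W + zᵀ Π z). -/
noncomputable def covUpdate (W : ℝ) (Pm : Matrix (Fin 2) (Fin 2) ℝ) (z : Fin 2 → ℝ) :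
    Matrix (Fin 2) (Fin 2) ℝ :=
  Pm - (W + z ⬝ᵥ Pm.mulVec z)⁻¹ • (Pm * vecMulVec z z * Pm)

/-- det Φ(Π,z) = det Π · W/(W + zᵀΠz); hence det Φ(Π,z) ≤ det Π, with strict
inequality iff z ≠ 0. -/
theorem covUpdate_det
    (Pm : Matrix (Fin 2) (Fin 2) ℝ) (hPm : Pm.PosDef)
    (z : Fin 2 → ℝ) (W : ℝ) (hW : 0 < W) :
    (covUpdate W Pm z).det = Pm.det * (W / (W + z ⬝ᵥ Pm.mulVec z)) ∧
      (covUpdate W Pm z).det ≤ Pm.det ∧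
      ((covUpdate W Pm z).det < Pm.det ↔ z ≠ 0) := by
  have ha : 0 ≤ z ⬝ᵥ Pm.mulVec z := hPm.posSemidef.re_dotProduct_nonneg z
  have hs : 0 < W + z ⬝ᵥ Pm.mulVec z := by linarith
  have hdet : (covUpdate W Pm z).det = Pm.det * (W / (W + z ⬝ᵥ Pm.mulVec z)) := by
    have hs' : W + z ⬝ᵥ Pm.mulVec z ≠ 0 := ne_of_gt hs
    simp only [covUpdate, Matrix.det_fin_two, Matrix.sub_apply, Matrix.smul_apply,
      Matrix.mul_apply, Matrix.vecMulVec_apply, Matrix.mulVec, dotProduct,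
      Fin.sum_univ_two, smul_eq_mul] at *
    have hs'' : W + (z 0 * (Pm 0 0 * z 0 + Pm 0 1 * z 1) + z 1 * (z 0 * Pm 1 0 + z 1 * Pm 1 1)) ≠ 0 := by
      intro h; apply hs'; linarith
    field_simp
    ring
  have hPd : 0 < Pm.det := hPm.det_pos
  have hW1 : W / (W + z ⬝ᵥ Pm.mulVec z) ≤ 1 := by
    rw [div_le_one hs]; linarith
  refine ⟨hdet, ?_, ?_⟩
  · rw [hdet]
    nlinarith
  · rw [hdet]
    constructor
    · intro h hz
      subst hz
      simp [div_self hW.ne'] at h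
    · intro hz
      have hq : 0 < z ⬝ᵥ Pm.mulVec z := hPm.re_dotProduct_pos hz
      have : W / (W + z ⬝ᵥ Pm.mulVec z) < 1 := by
        rw [div_lt_one hs]; linarith
      nlinarith
end

section
/- Let Π₀ be a 2×2 real positive definite matrix, W > 0, P ≥ 0, and z₀, …, z_{T−1} ∈ ℝ² with T ≥ 1, and define recursively Π_{t+1} := Φ(Π_t, z_t) = Π_t − (Π_t z_t z_tᵀ Π_t)/(W + z_tᵀ Π_t z_t). If the average excitation satisfies (1/T)·Σ_{t=0}^{T−1} z_tᵀ Π_t z_t ≤ P, then the accumulated information utility is bounded by T times the channel capacity: (1/2)·log det(Π₀) − (1/2)·log det(Π_T) ≤ T·(1/2)·log(1 + P/W); equivalently det(Π_T) ≥ det(Π₀)·(1 + P/W)^{−T}. -/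
open Matrix

lemma covUpdate_det_mul (W : ℝ) (Pm : Matrix (Fin 2) (Fin 2) ℝ) (z : Fin 2 → ℝ)
    (h : W + z ⬝ᵥ Pm.mulVec z ≠ 0) :
    (covUpdate W Pm z).det * (W + z ⬝ᵥ Pm.mulVec z) = Pm.det * W := by
  simp only [covUpdate, det_fin_two, Matrix.sub_apply, Matrix.smul_apply,
    Matrix.mul_apply, vecMulVec_apply, Fin.sum_univ_two, smul_eq_mul, mulVec,
    dotProduct] at *
  generalize hd : W + (z 0 * (Pm 0 0 * z 0 + Pm 0 1 * z 1) + z 1 * (Pm 1 0 * z 0 + Pm 1 1 * z 1)) = d at *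
  field_simp
  rw [← hd]
  ring

lemma covUpdate_step {W : ℝ} (hW : 0 < W) {Pm : Matrix (Fin 2) (Fin 2) ℝ}
    (hPm : Pm.PosDef) (z : Fin 2 → ℝ) :
    (covUpdate W Pm z).PosDef ∧
      (covUpdate W Pm z).det = Pm.det * (W / (W + z ⬝ᵥ Pm.mulVec z)) := by
  set s : ℝ := z ⬝ᵥ Pm.mulVec z with hs_def
  have hs : 0 ≤ s := by
    have := hPm.posSemidef.dotProduct_mulVec_nonneg z
    rw [hs_def]
    simpa only [star_trivial] using this
  have hWs : 0 < W + s := by linarith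
  have hZ : (W⁻¹ • vecMulVec z z : Matrix (Fin 2) (Fin 2) ℝ).PosSemidef := by
    rw [posSemidef_iff_dotProduct_mulVec]
    constructor
    · ext i j
      simp [conjTranspose_apply, vecMulVec_apply, mul_comm]
    · intro x
      have : star x ⬝ᵥ (W⁻¹ • vecMulVec z z : Matrix (Fin 2) (Fin 2) ℝ).mulVec x
          = W⁻¹ * (z 0 * x 0 + z 1 * x 1) ^ 2 := by
        simp [dotProduct, mulVec, vecMulVec_apply, Fin.sum_univ_two]
        ring
      rw [this]
      positivity
  set M : Matrix (Fin 2) (Fin 2) ℝ := Pm⁻¹ + W⁻¹ • vecMulVec z z with hM_def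
  have hM : M.PosDef := hPm.inv.add_posSemidef hZ
  have hPdet : IsUnit Pm.det := isUnit_iff_ne_zero.mpr (ne_of_gt hPm.det_pos)
  have hPinv : Pm * Pm⁻¹ = 1 := Matrix.mul_nonsing_inv _ hPdet
  have hZPZ : vecMulVec z z * Pm * vecMulVec z z = s • vecMulVec z z := by
    ext i j
    simp [mul_apply, vecMulVec_apply, Fin.sum_univ_two, mulVec, dotProduct, hs_def]
    ring
  have hmul : covUpdate W Pm z * M = 1 := by
    have expand : covUpdate W Pm z * M
        = Pm * Pm⁻¹ + W⁻¹ • (Pm * vecMulVec z z)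
          - (W + s)⁻¹ • (Pm * vecMulVec z z * (Pm * Pm⁻¹))
          - ((W + s)⁻¹ * W⁻¹) • (Pm * (vecMulVec z z * Pm * vecMulVec z z)) := by
      simp only [covUpdate, hM_def, ← hs_def, Matrix.mul_add, Matrix.sub_mul,
        Matrix.smul_mul, Matrix.mul_smul, smul_smul, Matrix.mul_assoc]
      module
    rw [expand, hPinv, hZPZ, Matrix.mul_one, Matrix.mul_smul]
    have hcoef : (W⁻¹ : ℝ) - (W + s)⁻¹ - (W + s)⁻¹ * W⁻¹ * s = 0 := by
      field_simp
      ring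
    have key : (1 : Matrix (Fin 2) (Fin 2) ℝ) + W⁻¹ • (Pm * vecMulVec z z)
          - (W + s)⁻¹ • (Pm * vecMulVec z z)
          - ((W + s)⁻¹ * W⁻¹) • s • (Pm * vecMulVec z z)
        = 1 + (W⁻¹ - (W + s)⁻¹ - (W + s)⁻¹ * W⁻¹ * s) • (Pm * vecMulVec z z) := by
      module
    rw [key, hcoef, zero_smul, add_zero]
  have hinv : M⁻¹ = covUpdate W Pm z := Matrix.inv_eq_left_inv hmul
  constructor
  · rw [← hinv]; exact hM.inv
  · have hdet2 := covUpdate_det_mul W Pm z (by rw [← hs_def]; exact hWs.ne')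
    rw [← hs_def] at hdet2
    rw [mul_div_assoc', eq_div_iff hWs.ne']
    exact hdet2

/-- If the average excitation power is at most P, the accumulated information
utility is at most T·C(P): (1/2)log det Π₀ − (1/2)log det Π_T ≤ T·(1/2)·log(1 + P/W);
equivalently det Π_T ≥ det Π₀ · (1 + P/W)^{-T}. -/
theorem covUpdate_capacity_bound
    (Pm0 : Matrix (Fin 2) (Fin 2) ℝ) (hPm0 : Pm0.PosDef)
    (W : ℝ) (hW : 0 < W) (P : ℝ) (hP : 0 ≤ P)
    (T : ℕ) (hT : 1 ≤ T) (z : ℕ → Fin 2 → ℝ)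
    (Pi : ℕ → Matrix (Fin 2) (Fin 2) ℝ)
    (hPi0 : Pi 0 = Pm0)
    (hrec : ∀ t, Pi (t + 1) = covUpdate W (Pi t) (z t))
    (hAvg : (1 / (T : ℝ)) * ∑ t ∈ Finset.range T, z t ⬝ᵥ (Pi t).mulVec (z t) ≤ P) :
    (1 / 2) * Real.log Pm0.det - (1 / 2) * Real.log (Pi T).det
        ≤ (T : ℝ) * ((1 / 2) * Real.log (1 + P / W)) ∧
      (Pi T).det ≥ Pm0.det * (1 + P / W) ^ (-(T : ℤ)) := by
  set s : ℕ → ℝ := fun t => z t ⬝ᵥ (Pi t).mulVec (z t) with hs_def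
  have hpos : ∀ t, (Pi t).PosDef := by
    intro t
    induction t with
    | zero => rw [hPi0]; exact hPm0
    | succ n ih => rw [hrec]; exact (covUpdate_step hW ih (z n)).1
  have hs : ∀ t, 0 ≤ s t := by
    intro t
    have := (hpos t).posSemidef.dotProduct_mulVec_nonneg (z t)
    simpa only [star_trivial] using this
  have hdet : ∀ t, (Pi (t + 1)).det = (Pi t).det * (W / (W + s t)) := by
    intro t
    rw [hrec]
    exact (covUpdate_step hW (hpos t) (z t)).2
  have hdetpos : ∀ t, 0 < (Pi t).det := fun t => (hpos t).det_pos
  have hWs : ∀ t, 0 < W + s t := fun t => by linarith [hs t]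
  have hppos : ∀ t, 0 < 1 + s t / W := fun t => by
    have : 0 ≤ s t / W := div_nonneg (hs t) hW.le
    linarith
  have hlog : ∀ t, Real.log ((Pi (t + 1)).det)
      = Real.log ((Pi t).det) - Real.log (1 + s t / W) := by
    intro t
    rw [hdet t, Real.log_mul (hdetpos t).ne' (div_pos hW (hWs t)).ne']
    have h0 : 1 + s t / W = (W + s t) / W := by field_simp
    have h1 : W / (W + s t) = (1 + s t / W)⁻¹ := by rw [h0, inv_div]
    rw [h1, Real.log_inv]
    ring
  have hsum : ∀ n, Real.log ((Pi n).det)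
      = Real.log Pm0.det - ∑ t ∈ Finset.range n, Real.log (1 + s t / W) := by
    intro n
    induction n with
    | zero => simp [hPi0]
    | succ m ih => rw [Finset.sum_range_succ, hlog m, ih]; ring
  -- Jensen
  have hT0 : (0 : ℝ) < T := by exact_mod_cast hT
  have havgpos : 0 ≤ (1 / (T : ℝ)) * ∑ t ∈ Finset.range T, s t := by
    have : 0 ≤ ∑ t ∈ Finset.range T, s t := Finset.sum_nonneg fun t _ => hs t
    positivity
  have jensen := (strictConcaveOn_log_Ioi.concaveOn).le_map_sum
    (t := Finset.range T) (w := fun _ => 1 / (T : ℝ)) (p := fun t => 1 + s t / W)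
    (fun i _ => by positivity)
    (by simp; field_simp)
    (fun i _ => Set.mem_Ioi.mpr (hppos i))
  have havg : ∑ t ∈ Finset.range T, (1 / (T : ℝ)) • (1 + s t / W)
      = 1 + ((1 / (T : ℝ)) * ∑ t ∈ Finset.range T, s t) / W := by
    have heach : ∀ t ∈ Finset.range T, (1 / (T : ℝ)) • (1 + s t / W)
        = 1 / (T : ℝ) + (1 / (T : ℝ)) * s t / W := by
      intro t _; simp only [smul_eq_mul]; ring
    rw [Finset.sum_congr rfl heach, Finset.sum_add_distrib, Finset.sum_const,
      Finset.card_range, nsmul_eq_mul]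
    have hsd : ∑ t ∈ Finset.range T, (1 / (T : ℝ)) * s t / W
        = ((1 / (T : ℝ)) * ∑ t ∈ Finset.range T, s t) / W := by
      rw [Finset.mul_sum, Finset.sum_div]
    rw [hsd]
    congr 1
    field_simp
  have harg : 0 < 1 + ((1 / (T : ℝ)) * ∑ t ∈ Finset.range T, s t) / W := by
    have := div_nonneg havgpos hW.le
    linarith
  have hbound : Real.log (1 + ((1 / (T : ℝ)) * ∑ t ∈ Finset.range T, s t) / W)
      ≤ Real.log (1 + P / W) := by
    apply Real.log_le_log harg
    gcongr
  have hkey : ∑ t ∈ Finset.range T, Real.log (1 + s t / W)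
      ≤ (T : ℝ) * Real.log (1 + P / W) := by
    rw [havg] at jensen
    have h2 : ∑ t ∈ Finset.range T, (1 / (T : ℝ)) • Real.log (1 + s t / W)
        = (1 / (T : ℝ)) * ∑ t ∈ Finset.range T, Real.log (1 + s t / W) := by
      simp [Finset.mul_sum]
    rw [h2] at jensen
    have := le_trans jensen hbound
    calc ∑ t ∈ Finset.range T, Real.log (1 + s t / W)
        = (T : ℝ) * ((1 / (T : ℝ)) * ∑ t ∈ Finset.range T, Real.log (1 + s t / W)) := by
          field_simp
      _ ≤ (T : ℝ) * Real.log (1 + P / W) := by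
          apply mul_le_mul_of_nonneg_left this hT0.le
  have hmain : Real.log Pm0.det - Real.log ((Pi T).det) ≤ (T : ℝ) * Real.log (1 + P / W) := by
    rw [hsum T]; linarith
  constructor
  · nlinarith [hmain]
  · have hq : (0 : ℝ) < 1 + P / W := by positivity
    have hqT : (0 : ℝ) < (1 + P / W) ^ T := by positivity
    have h3 : Real.log Pm0.det ≤ Real.log ((Pi T).det * (1 + P / W) ^ T) := by
      rw [Real.log_mul (hdetpos T).ne' hqT.ne', Real.log_pow]
      linarith
    have h4 : Pm0.det ≤ (Pi T).det * (1 + P / W) ^ T :=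
      (Real.log_le_log_iff hPm0.det_pos (mul_pos (hdetpos T) hqT)).mp h3
    rw [ge_iff_le, _root_.zpow_neg, zpow_natCast, ← div_eq_mul_inv, div_le_iff₀ hqT]
    exact h4
end
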